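/- Let H be a real Hilbert space, K a nonempty closed convex subset of H, and g : H → H a map whose range contains K (for every x ∈ K there exists w ∈ H with g w = x). Let F : H → ℝ be Fréchet differentiable and general convex with respect to g, i.e. F((1−t)·g u + t·g v) ≤ (1−t)·F(g u) + t·F(g v) for all u, v ∈ H with g u, g v ∈ K and all t ∈ [0,1]. Then for u ∈ H with g u ∈ K, the following are equivalent: (i) F(g u) ≤ F(x) for all x ∈ K; (ii) ⟨∇F(g u), g v − g u⟩ ≥ 0 for all v ∈ H with g v ∈ K. -/

import Mathlib

open scoped RealInnerProductSpace

open Filter Topology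

lemma line_deriv {H : Type*} [NormedAddCommGroup H] [InnerProductSpace ℝ H] [CompleteSpace H]
    (F : H → ℝ) (f' a d : H) (h : HasGradientAt F f' a) :
    HasDerivAt (fun t : ℝ => F (a + t • d)) ⟪f', d⟫ 0 := by
  have hline : HasDerivAt (fun t : ℝ => a + t • d) d 0 := by
    simpa using ((hasDerivAt_id (0 : ℝ)).smul_const d).const_add a
  have hF : HasFDerivAt F (InnerProductSpace.toDual ℝ H f') (a + (0 : ℝ) • d) := by
    simpa using h.hasFDerivAt
  exact (by simpa using hF.comp_hasDerivAt 0 hline : HasDerivAt (F ∘ fun t : ℝ => a + t • d) ⟪f', d⟫ 0)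

theorem stmt_0 {H : Type*} [NormedAddCommGroup H] [InnerProductSpace ℝ H] [CompleteSpace H]
    (K : Set H) (hK : K.Nonempty) (hKclosed : IsClosed K) (hKconv : Convex ℝ K)
    (g : H → H) (hg : ∀ x ∈ K, ∃ w : H, g w = x)
    (F : H → ℝ) (F' : H → H) (hF : ∀ x : H, HasGradientAt F (F' x) x)
    (hconv : ∀ u v : H, g u ∈ K → g v ∈ K → ∀ t ∈ Set.Icc (0 : ℝ) 1,
      F ((1 - t) • g u + t • g v) ≤ (1 - t) * F (g u) + t * F (g v))
    (u : H) (hu : g u ∈ K) :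
    (∀ x ∈ K, F (g u) ≤ F x) ↔ ∀ v : H, g v ∈ K → 0 ≤ ⟪F' (g u), g v - g u⟫ := by
  constructor
  · intro hmin v hv
    set d := g v - g u with hd
    set φ : ℝ → ℝ := fun t => F (g u + t • d) with hφ
    have hder : HasDerivAt φ ⟪F' (g u), d⟫ 0 := line_deriv F (F' (g u)) (g u) d (hF (g u))
    have hslope : Tendsto (slope φ 0) (𝓝[>] 0) (𝓝 ⟪F' (g u), d⟫) :=
      (hasDerivAt_iff_tendsto_slope.mp hder).mono_left
        (nhdsWithin_mono 0 (fun t ht => ne_of_gt ht))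
    refine ge_of_tendsto hslope ?_
    filter_upwards [Ioo_mem_nhdsGT_of_mem (Set.mem_Ico.mpr ⟨le_rfl, one_pos⟩)] with t ht
    have htK : g u + t • d ∈ K := by
      have := hKconv hu hv (by linarith [ht.1, ht.2] : (0:ℝ) ≤ 1 - t) ht.1.le (by ring)
      have heq : (1 - t) • g u + t • g v = g u + t • d := by
        simp [hd, smul_sub, sub_smul]; abel
      rwa [heq] at this
    have hge : φ 0 ≤ φ t := by simpa [hφ] using hmin _ htK
    have : (0:ℝ) ≤ (φ t - φ 0) / t := div_nonneg (by linarith) ht.1.le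
    simpa [slope_def_field, div_eq_iff, ht.1.ne'] using this
  · intro hvi x hx
    obtain ⟨v, rfl⟩ := hg x hx
    set d := g v - g u with hd
    set φ : ℝ → ℝ := fun t => F (g u + t • d) with hφ
    have hder : HasDerivAt φ ⟪F' (g u), d⟫ 0 := line_deriv F (F' (g u)) (g u) d (hF (g u))
    have hslope : Tendsto (slope φ 0) (𝓝[>] 0) (𝓝 ⟪F' (g u), d⟫) :=
      (hasDerivAt_iff_tendsto_slope.mp hder).mono_left
        (nhdsWithin_mono 0 (fun t ht => ne_of_gt ht))
    have hle : ⟪F' (g u), d⟫ ≤ F (g v) - F (g u) := by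
      refine le_of_tendsto hslope ?_
      filter_upwards [Ioo_mem_nhdsGT_of_mem (Set.mem_Ico.mpr ⟨le_rfl, one_pos⟩)] with t ht
      have hc := hconv u v hu hx t ⟨ht.1.le, ht.2.le⟩
      have heq : (1 - t) • g u + t • g v = g u + t • d := by
        simp [hd, smul_sub, sub_smul]; abel
      rw [heq] at hc
      have : φ t - φ 0 ≤ t * (F (g v) - F (g u)) := by
        simp only [hφ, zero_smul, add_zero]
        nlinarith [hc]
      have h2 : (φ t - φ 0) / t ≤ F (g v) - F (g u) :=
        (div_le_iff₀ ht.1).mpr (by linarith)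
      simpa [slope_def_field] using h2
    linarith [hvi v hx]
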